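/- (Infinitary Splitting Theorem) Let F, G be infinitary propositional formulas over σ and let A_1, A_2 be disjoint sets of atoms such that the partition {A_1, A_2} is infinitely separable on the dependency graph DG_{A_1 ∪ A_2}[F ∧ G]. If A_2 is disjoint from P(F) and A_1 is disjoint from P(G), then for any interpretation I: I is an (A_1 ∪ A_2)-stable model of F ∧ G if and only if I is both an A_1-stable model of F and an A_2-stable model of G. -/

import Mathlib

/-- Infinitary propositional formulas over signature `σ`:
atoms, conjunctions and disjunctions of (index-)sets of formulas, implication. -/
inductive Formula (σ : Type) : Type 1
  | atom : σ → Formula σ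
  | conj : (ι : Type) → (ι → Formula σ) → Formula σ
  | disj : (ι : Type) → (ι → Formula σ) → Formula σ
  | imp : Formula σ → Formula σ → Formula σ

namespace Formula

variable {σ : Type}

/-- `⊥` is the empty disjunction. -/
def bot : Formula σ := Formula.disj Empty (fun e => e.elim)

/-- Binary conjunction `F ∧ G`. -/
def and (F G : Formula σ) : Formula σ := Formula.conj Bool (fun b => if b then F else G)

/-- Binary disjunction `F ∨ G`. -/
def or (F G : Formula σ) : Formula σ := Formula.disj Bool (fun b => if b then F else G)

/-- Negation `¬F` abbreviates `F → ⊥`. -/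
def neg (F : Formula σ) : Formula σ := Formula.imp F bot

/-- Conjunction of a set of atoms. -/
def conjAtoms (S : Set σ) : Formula σ := Formula.conj S (fun p => Formula.atom p.val)

/-- Satisfaction of an infinitary formula by an interpretation `I ⊆ σ`. -/
def Sat (I : Set σ) : Formula σ → Prop
  | .atom p => p ∈ I
  | .conj _ f => ∀ i, Sat I (f i)
  | .disj _ f => ∃ i, Sat I (f i)
  | .imp F G => Sat I F → Sat I G

open Classical in
/-- The reduct `F^I`. -/
noncomputable def reduct (I : Set σ) : Formula σ → Formula σ
  | .atom p => if p ∈ I then Formula.atom p else bot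
  | .conj ι f => Formula.conj ι (fun i => reduct I (f i))
  | .disj ι f => Formula.disj ι (fun i => reduct I (f i))
  | .imp F G => if Sat I (Formula.imp F G) then Formula.imp (reduct I F) (reduct I G) else bot

/-- `I` is an `A`-stable model of `F`: `I` is minimal w.r.t. `≤_A`
(`J ≤_A I` iff `J ⊆ I` and `I \ J ⊆ A`) among interpretations satisfying `F^I`. -/
def AStable (A : Set σ) (I : Set σ) (F : Formula σ) : Prop :=
  Sat I (reduct I F) ∧ ∀ J : Set σ, J ⊆ I → I \ J ⊆ A → Sat J (reduct I F) → J = I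

/-- A stable model is a `σ`-stable model. -/
def Stable (I : Set σ) (F : Formula σ) : Prop := AStable Set.univ I F

/-- The strictly positive atoms `P(F)`. -/
def spos : Formula σ → Set σ
  | .atom p => {p}
  | .conj _ f => ⋃ i, spos (f i)
  | .disj _ f => ⋃ i, spos (f i)
  | .imp _ H => spos H

/-- `F` is (syntactically) the formula `⊥`, i.e. an empty disjunction. -/
def IsBot : Formula σ → Prop
  | .disj ι _ => IsEmpty ι
  | _ => False

open Classical in
mutual
/-- Positive nonnegated atoms `Pnn(F)`. -/
noncomputable def pnn : Formula σ → Set σ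
  | .atom p => {p}
  | .conj _ f => ⋃ i, pnn (f i)
  | .disj _ f => ⋃ i, pnn (f i)
  | .imp G H => if IsBot H then ∅ else nnn G ∪ pnn H

/-- Negative nonnegated atoms `Nnn(F)`. -/
noncomputable def nnn : Formula σ → Set σ
  | .atom _ => ∅
  | .conj _ f => ⋃ i, nnn (f i)
  | .disj _ f => ⋃ i, nnn (f i)
  | .imp G H => if IsBot H then ∅ else pnn G ∪ nnn H
end

/-- The rules of a formula, as antecedent/consequent pairs. -/
def rules : Formula σ → Set (Formula σ × Formula σ)
  | .atom _ => ∅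
  | .conj _ f => ⋃ i, rules (f i)
  | .disj _ f => ⋃ i, rules (f i)
  | .imp G H => insert (G, H) (rules H)

/-- Edge relation of the positive dependency graph `DG_A[F]` (vertex set `A`). -/
noncomputable def DGEdge (F : Formula σ) (A : Set σ) (p q : σ) : Prop :=
  p ∈ A ∧ q ∈ A ∧ ∃ R ∈ rules F, p ∈ spos R.2 ∧ q ∈ pnn R.1

/-- The atoms occurring in a formula. -/
def atoms : Formula σ → Set σ
  | .atom p => {p}
  | .conj _ f => ⋃ i, atoms (f i)
  | .disj _ f => ⋃ i, atoms (f i)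
  | .imp G H => atoms G ∪ atoms H

/-- `G` is a definition for the set `Q` of atoms: a conjunction of formulas
`H ∧ C^∧ → q` with `q ∈ Q`, `C ⊆ Q`, and no atom of `Q` occurring in `H`. -/
def IsDefinition (Q : Set σ) (G : Formula σ) : Prop :=
  ∃ (ι : Type) (g : ι → Formula σ), G = Formula.conj ι g ∧
    ∀ i, ∃ (H : Formula σ) (C : Set σ) (q : σ),
      q ∈ Q ∧ C ⊆ Q ∧ (∀ p ∈ Q, p ∉ atoms H) ∧
      g i = Formula.imp (Formula.and H (conjAtoms C)) (Formula.atom q)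

end Formula

section Graph

variable {V : Type*}

/-- An infinite walk in the directed graph with edge relation `E`. -/
def IsInfWalk (E : V → V → Prop) (w : ℕ → V) : Prop := ∀ i, E (w i) (w (i + 1))

/-- The partition `{P₁, P₂}` is infinitely separable: every infinite walk
visits `P₁` or `P₂` only finitely often. -/
def InfSeparable (E : V → V → Prop) (P1 P2 : Set V) : Prop :=
  ∀ w : ℕ → V, IsInfWalk E w → {i | w i ∈ P1}.Finite ∨ {i | w i ∈ P2}.Finite

/-- `u` and `v` are in the same strongly connected component:
each is reachable from the other. -/
def SameSCC (E : V → V → Prop) (u v : V) : Prop :=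
  Relation.ReflTransGen E u v ∧ Relation.ReflTransGen E v u

/-- The partition `{P₁, P₂}` is separable: every strongly connected
component is contained in `P₁` or in `P₂`. -/
def Separable (E : V → V → Prop) (P1 P2 : Set V) : Prop :=
  ∀ u v, SameSCC E u v → ((u ∈ P1 ∧ v ∈ P1) ∨ (u ∈ P2 ∧ v ∈ P2))

end Graph

namespace Formula
variable {σ : Type}

lemma not_sat_bot {I : Set σ} : ¬ Sat I (bot : Formula σ) := fun h => h.choose.elim

lemma not_sat_of_isBot {I : Set σ} {H : Formula σ} (h : IsBot H) : ¬ Sat I H := by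
  cases H with
  | disj ι f =>
    intro hs
    simp only [IsBot] at h
    obtain ⟨i, -⟩ := hs
    exact h.false i
  | atom p => exact absurd h (by simp [IsBot])
  | conj ι f => exact absurd h (by simp [IsBot])
  | imp F G => exact absurd h (by simp [IsBot])

lemma sat_reduct_iff (I : Set σ) : ∀ F : Formula σ, Sat I (reduct I F) ↔ Sat I F := by
  intro F
  induction F with
  | atom p => by_cases h : p ∈ I <;> simp [reduct, Sat, h, bot]
  | conj ι f ih => simp only [reduct, Sat]; exact forall_congr' ih
  | disj ι f ih => simp only [reduct, Sat]; exact exists_congr ih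
  | imp F G ihF ihG =>
    simp only [reduct]
    split_ifs with h
    · simp only [Sat]
      constructor
      · intro _; exact h
      · intro h' hrF; exact ihG.2 (h' (ihF.1 hrF))
    · exact iff_of_false not_sat_bot (by simpa [Sat] using h)

lemma sat_reduct_up {I J : Set σ} : ∀ {F : Formula σ}, Sat J (reduct I F) → Sat I (reduct I F) := by
  intro F
  induction F with
  | atom p =>
    by_cases h : p ∈ I
    · intro _; simpa [reduct, if_pos h, Sat] using h
    · intro hJ; exact absurd (by simpa [reduct, if_neg h] using hJ) not_sat_bot
  | conj ι f ih =>
    simp only [reduct, Sat]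
    intro hJ i
    exact ih i (hJ i)
  | disj ι f ih =>
    simp only [reduct, Sat]
    rintro ⟨i, hi⟩
    exact ⟨i, ih i hi⟩
  | imp F G ihF ihG =>
    simp only [reduct]
    split_ifs with h
    · simp only [Sat]
      intro _ hIF
      exact (sat_reduct_iff I G).2 (h ((sat_reduct_iff I F).1 hIF))
    · intro hJ; exact absurd hJ not_sat_bot

lemma sat_reduct_down {I J : Set σ} :
    ∀ {F : Formula σ}, Sat I (reduct I F) → (∀ p ∈ spos F, p ∈ I → p ∈ J) →
      Sat J (reduct I F) := by
  intro F
  induction F with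
  | atom p =>
    by_cases h : p ∈ I
    · intro hI hsub
      simp only [reduct, if_pos h, Sat] at *
      exact hsub p (by simp [spos]) h
    · intro hI _; exact absurd (by simpa [reduct, if_neg h] using hI) not_sat_bot
  | conj ι f ih =>
    simp only [reduct, Sat, spos]
    intro hI hsub i
    exact ih i (hI i) (fun p hp => hsub p (Set.mem_iUnion.2 ⟨i, hp⟩))
  | disj ι f ih =>
    simp only [reduct, Sat, spos]
    rintro ⟨i, hi⟩ hsub
    exact ⟨i, ih i hi (fun p hp => hsub p (Set.mem_iUnion.2 ⟨i, hp⟩))⟩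
  | imp F G ihF ihG =>
    simp only [reduct]
    split_ifs with h
    · simp only [Sat, spos]
      intro hI hsub hJF
      exact ihG (hI (sat_reduct_up hJF)) hsub
    · intro hI _; exact absurd hI not_sat_bot

end Formula

namespace Formula
variable {σ : Type}

lemma sat_reduct_pol {I : Set σ} :
    ∀ (F : Formula σ) (J K : Set σ), Sat J (reduct I F) →
      (∀ p ∈ nnn F, p ∈ K → p ∈ J) → (∀ p ∈ pnn F, p ∈ J → p ∈ K) →
      Sat K (reduct I F) := by
  intro F
  induction F with
  | atom p =>
    intro J K hJ hn hp
    by_cases h : p ∈ I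
    · simp only [reduct, if_pos h, Sat] at *
      exact hp p (by simp [pnn]) hJ
    · exact absurd (by simpa [reduct, if_neg h] using hJ) not_sat_bot
  | conj ι f ih =>
    intro J K hJ hn hp
    simp only [reduct, Sat] at *
    intro i
    refine ih i J K (hJ i) (fun q hq => hn q ?_) (fun q hq => hp q ?_) <;>
      simp only [nnn, pnn] <;> exact Set.mem_iUnion.2 ⟨i, hq⟩
  | disj ι f ih =>
    intro J K hJ hn hp
    simp only [reduct, Sat] at *
    obtain ⟨i, hi⟩ := hJ
    refine ⟨i, ih i J K hi (fun q hq => hn q ?_) (fun q hq => hp q ?_)⟩ <;>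
      simp only [nnn, pnn] <;> exact Set.mem_iUnion.2 ⟨i, hq⟩
  | imp F G ihF ihG =>
    intro J K hJ hn hp
    simp only [reduct] at *
    split_ifs at * with h
    · simp only [Sat] at *
      by_cases hb : IsBot G
      · intro hKF
        have hIF : Sat I F := (sat_reduct_iff I F).1 (sat_reduct_up hKF)
        exact absurd (h hIF) (not_sat_of_isBot hb)
      · simp only [pnn, nnn, if_neg hb] at hn hp
        intro hKF
        have hJF : Sat J (reduct I F) :=
          ihF K J hKF (fun q hq hqJ => hp q (Set.mem_union_left _ hq) hqJ)
            (fun q hq hqK => hn q (Set.mem_union_left _ hq) hqK)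
        exact ihG J K (hJ hJF) (fun q hq => hn q (Set.mem_union_right _ hq))
          (fun q hq => hp q (Set.mem_union_right _ hq))
    · exact absurd hJ not_sat_bot

lemma witness {I : Set σ} :
    ∀ (F : Formula σ) (J K : Set σ), J ⊆ K → Sat J (reduct I F) → ¬ Sat K (reduct I F) →
      ∃ R ∈ rules F, (∃ q, q ∈ pnn R.1 ∧ q ∈ K ∧ q ∉ J) ∧
        (∃ p, p ∈ spos R.2 ∧ p ∈ I ∧ p ∉ K) := by
  intro F
  induction F with
  | atom p =>
    intro J K hJK hJ hK
    by_cases h : p ∈ I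
    · rw [reduct, if_pos h] at hJ hK
      exact absurd (show Sat K (atom p) from hJK hJ) hK
    · exact absurd (by simpa [reduct, if_neg h] using hJ) not_sat_bot
  | conj ι f ih =>
    intro J K hJK hJ hK
    simp only [reduct, Sat] at hJ hK
    push_neg at hK
    obtain ⟨i, hi⟩ := hK
    obtain ⟨R, hR, hq, hp⟩ := ih i J K hJK (hJ i) hi
    exact ⟨R, by simpa only [rules] using Set.mem_iUnion.2 ⟨i, hR⟩, hq, hp⟩
  | disj ι f ih =>
    intro J K hJK hJ hK
    simp only [reduct, Sat] at hJ hK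
    push_neg at hK
    obtain ⟨i, hi⟩ := hJ
    obtain ⟨R, hR, hq, hp⟩ := ih i J K hJK hi (hK i)
    exact ⟨R, by simpa only [rules] using Set.mem_iUnion.2 ⟨i, hR⟩, hq, hp⟩
  | imp F G ihF ihG =>
    intro J K hJK hJ hK
    simp only [reduct] at hJ hK
    split_ifs at hJ hK with h
    · simp only [Sat] at hJ hK
      push_neg at hK
      obtain ⟨hKF, hKG⟩ := hK
      by_cases hJF : Sat J (reduct I F)
      · obtain ⟨R, hR, hq, hp⟩ := ihG J K hJK (hJ hJF) hKG
        exact ⟨R, Set.mem_insert_iff.2 (Or.inr hR), hq, hp⟩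
      · refine ⟨(F, G), Set.mem_insert _ _, ?_, ?_⟩
        · by_contra hc
          push_neg at hc
          exact hJF (sat_reduct_pol F K J hKF
            (fun q _ hqJ => hJK hqJ) hc)
        · have hIG : Sat I (reduct I G) :=
            (sat_reduct_iff I G).2 (h ((sat_reduct_iff I F).1 (sat_reduct_up hKF)))
          by_contra hc
          push_neg at hc
          exact hKG (sat_reduct_down hIG hc)
    · exact absurd hJ not_sat_bot

end Formula

section WalkMachine
variable {V : Type*}

/-- One step of the walk-generating machine. -/
def wstep (seg : V → List V) (lst : V → V) : V × List V → V × List V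
  | (v, []) =>
    match seg v with
    | [] => (lst v, [])
    | a :: t => (a, t ++ [lst v])
  | (_, a :: t) => (a, t)

lemma wstep_nil_nil (seg : V → List V) (lst : V → V) {v : V} (h : seg v = []) :
    wstep seg lst (v, []) = (lst v, []) := by simp [wstep, h]

lemma wstep_nil_cons (seg : V → List V) (lst : V → V) {v a : V} {t : List V}
    (h : seg v = a :: t) : wstep seg lst (v, []) = (a, t ++ [lst v]) := by simp [wstep, h]

lemma wstep_cons (seg : V → List V) (lst : V → V) (v a : V) (t : List V) :
    wstep seg lst (v, a :: t) = (a, t) := rfl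

lemma exists_infWalk (E : V → V → Prop) (X P1 P2 : Set V) (hX : X ⊆ P1 ∪ P2)
    (v0 : V) (hv0 : v0 ∈ X)
    (hseg : ∀ v ∈ X, ∃ (l : List V) (u : V), List.Chain E v (l ++ [u]) ∧ u ∈ X ∧
        (v ∈ P1 → u ∈ P2) ∧ (v ∈ P2 → u ∈ P1)) :
    ∃ w : ℕ → V, IsInfWalk E w ∧ {i | w i ∈ P1}.Infinite ∧ {i | w i ∈ P2}.Infinite := by
  classical
  have hseg' : ∀ v, ∃ (l : List V) (u : V), v ∈ X →
      List.Chain E v (l ++ [u]) ∧ u ∈ X ∧ (v ∈ P1 → u ∈ P2) ∧ (v ∈ P2 → u ∈ P1) := by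
    intro v
    by_cases h : v ∈ X
    · obtain ⟨l, u, hl⟩ := hseg v h
      exact ⟨l, u, fun _ => hl⟩
    · exact ⟨[], v, fun hc => absurd hc h⟩
  choose seg lastv hs using hseg'
  set st : ℕ → V × List V := fun n => (wstep seg lastv)^[n] (v0, []) with hstdef
  have hsucc : ∀ n, st (n + 1) = wstep seg lastv (st n) := by
    intro n; simp only [hstdef]; exact Function.iterate_succ_apply' _ _ _
  have hzero : st 0 = (v0, []) := rfl
  -- invariant
  set Inv : V × List V → Prop :=
    fun s => List.Chain E s.1 s.2 ∧ (s.1 :: s.2).getLast (List.cons_ne_nil _ _) ∈ X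
    with hInvdef
  have hstep : ∀ s, Inv s → Inv (wstep seg lastv s) ∧ E s.1 (wstep seg lastv s).1 := by
    rintro ⟨v, l⟩ ⟨hch, hlast⟩
    cases l with
    | nil =>
      have hvX : v ∈ X := by simpa using hlast
      obtain ⟨hchain, huX, h12, h21⟩ := hs v hvX
      cases hsegv : seg v with
      | nil =>
        rw [wstep_nil_nil seg lastv hsegv]
        rw [hsegv] at hchain
        simp only [List.nil_append, List.Chain, List.isChain_cons_cons] at hchain
        exact ⟨⟨List.Chain.nil, by simpa using huX⟩, hchain.1⟩
      | cons a t =>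
        rw [wstep_nil_cons seg lastv hsegv]
        rw [hsegv] at hchain
        simp only [List.cons_append, List.Chain, List.isChain_cons_cons] at hchain
        refine ⟨⟨hchain.2, ?_⟩, hchain.1⟩
        have : (a :: (t ++ [lastv v])).getLast (List.cons_ne_nil _ _) = lastv v := by
          simp [List.getLast_append]
        simpa [this] using huX
    | cons a t =>
      rw [wstep_cons]
      simp only [List.Chain, List.isChain_cons_cons] at hch
      refine ⟨⟨hch.2, ?_⟩, hch.1⟩
      have : (v :: a :: t).getLast (List.cons_ne_nil _ _)
          = (a :: t).getLast (List.cons_ne_nil _ _) := List.getLast_cons _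
      rw [this] at hlast
      exact hlast
  have hInv : ∀ n, Inv (st n) := by
    intro n
    induction n with
    | zero => exact ⟨List.Chain.nil, by simpa [hzero] using hv0⟩
    | succ n ih => rw [hsucc]; exact (hstep _ ih).1
  have hwalk : IsInfWalk E (fun n => (st n).1) := by
    intro n
    have := (hstep _ (hInv n)).2
    rw [← hsucc] at this
    exact this
  -- running through the list
  have hrun : ∀ (t : List V) (v : V) (n : ℕ), st n = (v, t) →
      st (n + t.length) = ((v :: t).getLast (List.cons_ne_nil _ _), []) := by
    intro t
    induction t with
    | nil => intro v n h; simpa using h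
    | cons a t iht =>
      intro v n h
      have h1 : st (n + 1) = (a, t) := by rw [hsucc, h, wstep_cons]
      have h2 := iht a (n + 1) h1
      have hlen : n + (a :: t).length = (n + 1) + t.length := by
        simp only [List.length_cons]; omega
      rw [hlen, h2]
      congr 1
  -- from an empty state, reach another empty state on the opposite side
  have hnext : ∀ n v, st n = (v, []) → v ∈ X → ∃ m, m > n ∧ ∃ u, st m = (u, []) ∧ u ∈ X ∧
      (v ∈ P1 → u ∈ P2) ∧ (v ∈ P2 → u ∈ P1) := by
    intro n v hst hvX
    obtain ⟨hchain, huX, h12, h21⟩ := hs v hvX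
    have h1 : st (n + 1) = wstep seg lastv (v, []) := by rw [hsucc, hst]
    cases hsegv : seg v with
    | nil =>
      rw [wstep_nil_nil seg lastv hsegv] at h1
      exact ⟨n + 1, by omega, lastv v, h1, huX, h12, h21⟩
    | cons a t =>
      rw [wstep_nil_cons seg lastv hsegv] at h1
      have h2 := hrun (t ++ [lastv v]) a (n + 1) h1
      have hgl : (a :: (t ++ [lastv v])).getLast (List.cons_ne_nil _ _) = lastv v := by
        simp [List.getLast_append]
      rw [hgl] at h2
      exact ⟨n + 1 + (t ++ [lastv v]).length, by simp; omega, lastv v, h2, huX, h12, h21⟩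
  -- there are empty states beyond every index
  have hEX : ∀ k, ∃ n, n ≥ k ∧ (st n).2 = [] := by
    intro k
    induction k with
    | zero => exact ⟨0, le_refl _, by rw [hzero]⟩
    | succ k ih =>
      obtain ⟨n, hn, he⟩ := ih
      by_cases h : n ≥ k + 1
      · exact ⟨n, h, he⟩
      · have hnk : n = k := by omega
        have hst1 : st n = ((st n).1, []) := by rw [← he]
        have hvX : (st n).1 ∈ X := by
          have := (hInv n).2
          rw [he] at this
          simpa using this
        obtain ⟨m, hm, u, hu, huX, -, -⟩ := hnext n (st n).1 hst1 hvX
        exact ⟨m, by omega, by rw [hu]⟩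
  -- both parts are visited beyond every index
  have hboth : ∀ k, (∃ n, n > k ∧ (st n).1 ∈ P1) ∧ (∃ n, n > k ∧ (st n).1 ∈ P2) := by
    intro k
    obtain ⟨n, hn, he⟩ := hEX (k + 1)
    have hst1 : st n = ((st n).1, []) := by rw [← he]
    have hvX : (st n).1 ∈ X := by
      have := (hInv n).2
      rw [he] at this
      simpa using this
    obtain ⟨m, hm, u, hu, huX, h12, h21⟩ := hnext n (st n).1 hst1 hvX
    rcases hX hvX with hP | hP
    · refine ⟨⟨n, by omega, hP⟩, ⟨m, by omega, ?_⟩⟩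
      rw [hu]
      exact h12 hP
    · refine ⟨⟨m, by omega, ?_⟩, ⟨n, by omega, hP⟩⟩
      rw [hu]
      exact h21 hP
  refine ⟨fun n => (st n).1, hwalk, ?_, ?_⟩
  · exact Set.infinite_of_forall_exists_gt (fun k => by
      obtain ⟨⟨n, hn, hP⟩, -⟩ := hboth k
      exact ⟨n, hP, hn⟩)
  · exact Set.infinite_of_forall_exists_gt (fun k => by
      obtain ⟨-, ⟨n, hn, hP⟩⟩ := hboth k
      exact ⟨n, hP, hn⟩)

end WalkMachine

namespace Formula
variable {σ : Type}

lemma sat_reduct_and {F G : Formula σ} {I J : Set σ} :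
    Sat J (reduct I (Formula.and F G)) ↔ Sat J (reduct I F) ∧ Sat J (reduct I G) := by
  simp only [Formula.and, reduct, Sat]
  constructor
  · intro h
    exact ⟨by simpa using h true, by simpa using h false⟩
  · rintro ⟨h1, h2⟩ b
    cases b
    · simpa using h2
    · simpa using h1

lemma rules_and_left {F G : Formula σ} : rules F ⊆ rules (Formula.and F G) := by
  intro R hR
  simp only [Formula.and, rules]
  exact Set.mem_iUnion.2 ⟨true, by simpa using hR⟩

lemma rules_and_right {F G : Formula σ} : rules G ⊆ rules (Formula.and F G) := by
  intro R hR
  simp only [Formula.and, rules]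
  exact Set.mem_iUnion.2 ⟨false, by simpa using hR⟩

lemma chain_and_mem {V : Type*} {E : V → V → Prop} {S : Set V} :
    ∀ {l : List V} {v : V}, List.Chain (fun a b => E a b ∧ b ∈ S) v l → ∀ x ∈ l, x ∈ S := by
  intro l
  induction l with
  | nil => intro v _ x hx; simp at hx
  | cons a t ih =>
    intro v h x hx
    simp only [List.Chain, List.isChain_cons_cons] at h
    rcases List.mem_cons.1 hx with rfl | hx
    · exact h.1.2
    · exact ih h.2 x hx

lemma reach_other {F G Φ : Formula σ} {I J : Set σ} {A B C : Set σ}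
    (hr : rules Φ ⊆ rules (Formula.and F G))
    (hJI : J ⊆ I) (hXA : I \ J ⊆ A) (hXBC : I \ J ⊆ B ∪ C)
    (hJΦ : Sat J (reduct I Φ))
    (hmin : ∀ K, K ⊆ I → I \ K ⊆ B → Sat K (reduct I Φ) → K = I)
    {v : σ} (hv : v ∈ I \ J) (hvB : v ∈ B) :
    ∃ q, Relation.ReflTransGen
        (fun a b => DGEdge (Formula.and F G) A a b ∧ b ∈ I \ J) v q ∧ q ∈ C := by
  by_contra hc
  push_neg at hc
  set R : σ → σ → Prop := fun a b => DGEdge (Formula.and F G) A a b ∧ b ∈ I \ J with hR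
  set Y : Set σ := {p | p ∈ I \ J ∧ p ∈ B ∧ ∀ q, Relation.ReflTransGen R p q → q ∉ C}
    with hY
  have hvY : v ∈ Y := ⟨hv, hvB, hc⟩
  have hYX : Y ⊆ I \ J := fun p hp => hp.1
  have hKne : ¬ Sat (I \ Y) (reduct I Φ) := by
    intro hsat
    have hIK : I \ (I \ Y) ⊆ B := by
      intro p hp
      have hpY : p ∈ Y := by
        by_contra h
        exact hp.2 ⟨hp.1, h⟩
      exact hpY.2.1
    have heq := hmin _ Set.diff_subset hIK hsat
    have : v ∈ I \ Y := by rw [heq]; exact hv.1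
    exact this.2 hvY
  have hJK : J ⊆ I \ Y := fun p hp => ⟨hJI hp, fun hpY => (hYX hpY).2 hp⟩
  obtain ⟨Rl, hRmem, ⟨q, hqpnn, hqK, hqJ⟩, ⟨p, hpspos, hpI, hpK⟩⟩ :=
    witness Φ J (I \ Y) hJK hJΦ hKne
  have hpY : p ∈ Y := by
    by_contra h
    exact hpK ⟨hpI, h⟩
  have hqX : q ∈ I \ J := ⟨hqK.1, hqJ⟩
  have hedge : R p q := ⟨⟨hXA (hYX hpY), hXA hqX, Rl, hr hRmem, hpspos, hqpnn⟩, hqX⟩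
  have hqC : q ∉ C := hpY.2.2 q (Relation.ReflTransGen.single hedge)
  have hqB : q ∈ B := (hXBC hqX).resolve_right hqC
  have hqY : q ∈ Y :=
    ⟨hqX, hqB, fun r hqr => hpY.2.2 r ((Relation.ReflTransGen.single hedge).trans hqr)⟩
  exact hqK.2 hqY

end Formula

/-- Infinitary Splitting Theorem: if `{A₁, A₂}` is infinitely
separable on `DG_{A₁∪A₂}[F ∧ G]`, `A₂` is disjoint from `P(F)` and `A₁` from
`P(G)`, then `I` is an `(A₁ ∪ A₂)`-stable model of `F ∧ G` iff it is an
`A₁`-stable model of `F` and an `A₂`-stable model of `G`. -/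
theorem infinitary_splitting_theorem {σ : Type} (F G : Formula σ)
    (A1 A2 : Set σ) (hdisj : Disjoint A1 A2)
    (hsep : InfSeparable (Formula.DGEdge (Formula.and F G) (A1 ∪ A2)) A1 A2)
    (hF : Disjoint A2 (Formula.spos F)) (hG : Disjoint A1 (Formula.spos G))
    (I : Set σ) :
    Formula.AStable (A1 ∪ A2) I (Formula.and F G) ↔
      Formula.AStable A1 I F ∧ Formula.AStable A2 I G := by
  classical
  constructor
  · rintro ⟨hsat, hmin⟩
    obtain ⟨hsatF, hsatG⟩ := Formula.sat_reduct_and.1 hsat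
    refine ⟨⟨hsatF, ?_⟩, ⟨hsatG, ?_⟩⟩
    · intro J hJI hIJ hJF
      have hJG : Formula.Sat J (Formula.reduct I G) :=
        Formula.sat_reduct_down hsatG (fun p hp hpI => by
          by_contra hpJ
          exact Set.disjoint_left.mp hG (hIJ ⟨hpI, hpJ⟩) hp)
      exact hmin J hJI (hIJ.trans Set.subset_union_left)
        (Formula.sat_reduct_and.2 ⟨hJF, hJG⟩)
    · intro J hJI hIJ hJG
      have hJF : Formula.Sat J (Formula.reduct I F) :=
        Formula.sat_reduct_down hsatF (fun p hp hpI => by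
          by_contra hpJ
          exact Set.disjoint_left.mp hF (hIJ ⟨hpI, hpJ⟩) hp)
      exact hmin J hJI (hIJ.trans Set.subset_union_right)
        (Formula.sat_reduct_and.2 ⟨hJF, hJG⟩)
  · rintro ⟨⟨hsatF, hminF⟩, ⟨hsatG, hminG⟩⟩
    refine ⟨Formula.sat_reduct_and.2 ⟨hsatF, hsatG⟩, ?_⟩
    intro J hJI hIJ hJsat
    by_contra hne
    have hXne : (I \ J).Nonempty := by
      rcases Set.eq_empty_or_nonempty (I \ J) with he | hne'
      · exact absurd (Set.Subset.antisymm hJI (Set.diff_eq_empty.1 he)) hne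
      · exact hne'
    obtain ⟨v0, hv0⟩ := hXne
    obtain ⟨hJF, hJG⟩ := Formula.sat_reduct_and.1 hJsat
    have hXBC : I \ J ⊆ A2 ∪ A1 := fun p hp => (hIJ hp).elim Or.inr Or.inl
    have hseg : ∀ v ∈ I \ J, ∃ (l : List σ) (u : σ),
        List.Chain (Formula.DGEdge (Formula.and F G) (A1 ∪ A2)) v (l ++ [u]) ∧
          u ∈ I \ J ∧ (v ∈ A1 → u ∈ A2) ∧ (v ∈ A2 → u ∈ A1) := by
      intro v hv
      have hconv : ∀ (q : σ) (C : Set σ), q ∈ C →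
          Relation.ReflTransGen
            (fun a b => Formula.DGEdge (Formula.and F G) (A1 ∪ A2) a b ∧ b ∈ I \ J) v q →
          v ∉ C → ∃ (l : List σ) (u : σ),
            List.Chain (Formula.DGEdge (Formula.and F G) (A1 ∪ A2)) v (l ++ [u]) ∧
              u ∈ I \ J ∧ u ∈ C := by
        intro q C hqC hq hvC
        obtain ⟨l, hcl, hlast⟩ := List.exists_isChain_cons_of_relationReflTransGen hq
        have hlne : l ≠ [] := by
          rintro rfl
          simp at hlast
          exact hvC (hlast ▸ hqC)
        have hgl : l.getLast hlne = q := by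
          rw [← List.getLast_cons (l := l) hlne] at *
          exact hlast
        have hql : q ∈ l := hgl ▸ List.getLast_mem hlne
        have hqX : q ∈ I \ J := Formula.chain_and_mem hcl q hql
        refine ⟨l.dropLast, q, ?_, hqX, hqC⟩
        have hdl : l.dropLast ++ [q] = l := by
          rw [← hgl]
          exact List.dropLast_append_getLast hlne
        rw [hdl]
        exact hcl.imp (fun a b hab => hab.1)
      rcases hIJ hv with hv1 | hv2
      · obtain ⟨q, hq, hqA2⟩ :=
          Formula.reach_other (Φ := F) Formula.rules_and_left hJI hIJ hIJ hJF hminF hv hv1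
        obtain ⟨l, u, hchain, huX, huA2⟩ :=
          hconv q A2 hqA2 hq (fun h => Set.disjoint_left.mp hdisj hv1 h)
        exact ⟨l, u, hchain, huX, fun _ => huA2,
          fun hv2 => (Set.disjoint_left.mp hdisj hv1 hv2).elim⟩
      · obtain ⟨q, hq, hqA1⟩ :=
          Formula.reach_other (Φ := G) Formula.rules_and_right hJI hIJ hXBC hJG hminG hv hv2
        obtain ⟨l, u, hchain, huX, huA1⟩ :=
          hconv q A1 hqA1 hq (fun h => Set.disjoint_left.mp hdisj h hv2)
        exact ⟨l, u, hchain, huX,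
          fun hv1 => (Set.disjoint_left.mp hdisj hv1 hv2).elim, fun _ => huA1⟩
    obtain ⟨w, hw, h1, h2⟩ :=
      exists_infWalk (Formula.DGEdge (Formula.and F G) (A1 ∪ A2)) (I \ J) A1 A2 hIJ v0 hv0 hseg
    rcases hsep w hw with hfin | hfin
    · exact h1 hfin
    · exact h2 hfin
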